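/- Let $\Delta^{(n)}$ be the $(n-1)\times(n-1)$ discrete Dirichlet Laplacian ($2$ on the diagonal, $-1$ on the off-diagonals), $\vec\sigma$ with $\sigma_k = k(n-k)/2$, $\vec 1 = (1,\dots,1)$, and $\mu_0 = 1/(\vec\sigma\cdot\vec 1) = 12/((n+1)n(n-1))$. Let $P_\sigma$ denote orthogonal projection onto $\{\vec z : \vec\sigma \cdot \vec z = 0\}$. Then $\Delta^{(n)}$ is positive definite, and there exists $\mu_1 > 0$ such that for all $\vec y \in \mathbb{R}^{n-1}$: $\vec y \cdot (\Delta^{(n)} \vec y) - \mu_0 (\vec 1 \cdot \vec y)^2 \ge \mu_1 |P_\sigma \vec y|^2$. -/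

import Mathlib

open Matrix

open Matrix Finset

def stmt11ext (m : ℕ) (y : Fin m → ℝ) (k : ℕ) : ℝ := if h : k < m then y ⟨k, h⟩ else 0

def stmt11g (m : ℕ) (y : Fin m → ℝ) : ℕ → ℝ
  | 0 => 0
  | k+1 => stmt11ext m y k

def stmt11lap (m : ℕ) : Matrix (Fin m) (Fin m) ℝ := fun i j =>
  if (i:ℕ) = (j:ℕ) then 2
  else if (i:ℕ) + 1 = (j:ℕ) ∨ (j:ℕ) + 1 = (i:ℕ) then -1 else 0

lemma stmt11tele (a : ℕ → ℝ) (m : ℕ) :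
    ∑ k ∈ Finset.range m, a (k+1) * (2*a (k+1) - a (k+2) - a k)
      = ∑ i ∈ Finset.range (m+1), (a (i+1) - a i)^2
        - a (m+1) * (a (m+1) - a m) - a 0 * (a 0 - a 1) := by
  induction m with
  | zero => simp [Finset.sum_range_one]; ring
  | succ m ih =>
      rw [Finset.sum_range_succ, Finset.sum_range_succ (fun i => (a (i+1) - a i)^2) (m+1), ih]
      ring

lemma stmt11mulVec (m : ℕ) (y : Fin m → ℝ) (i : Fin m) :
    (stmt11lap m).mulVec y i
      = 2 * stmt11g m y ((i:ℕ)+1) - stmt11g m y ((i:ℕ)+2) - stmt11g m y (i:ℕ) := by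
  have hy : ∀ j : Fin m, y j = stmt11ext m y (j:ℕ) := by
    intro j; simp [stmt11ext]
  have h1 : (stmt11lap m).mulVec y i
      = ∑ t ∈ Finset.range m,
          ((if (i:ℕ) = t then (2:ℝ) else if (i:ℕ)+1 = t ∨ t+1 = (i:ℕ) then -1 else 0)
            * stmt11ext m y t) := by
    rw [show (stmt11lap m).mulVec y i = ∑ j : Fin m, stmt11lap m i j * y j from rfl]
    rw [← Fin.sum_univ_eq_sum_range (fun t =>
      ((if (i:ℕ) = t then (2:ℝ) else if (i:ℕ)+1 = t ∨ t+1 = (i:ℕ) then -1 else 0)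
        * stmt11ext m y t)) m]
    exact Finset.sum_congr rfl (fun j _ => by rw [← hy j]; rfl)
  rw [h1]
  have hsplit : ∀ t ∈ Finset.range m,
      ((if (i:ℕ) = t then (2:ℝ) else if (i:ℕ)+1 = t ∨ t+1 = (i:ℕ) then -1 else 0)
        * stmt11ext m y t)
      = (if t = (i:ℕ) then 2 * stmt11ext m y t else 0)
        - (if t = (i:ℕ)+1 then stmt11ext m y t else 0)
        - (if t+1 = (i:ℕ) then stmt11ext m y t else 0) := by
    intro t _
    split_ifs <;> (try ring) <;> exfalso <;> omega
  rw [Finset.sum_congr rfl hsplit]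
  rw [Finset.sum_sub_distrib, Finset.sum_sub_distrib]
  rw [Finset.sum_ite_eq' (Finset.range m) ((i:ℕ)) (fun t => 2 * stmt11ext m y t)]
  rw [Finset.sum_ite_eq' (Finset.range m) ((i:ℕ)+1) (fun t => stmt11ext m y t)]
  have e1 : (if (i:ℕ) ∈ Finset.range m then 2 * stmt11ext m y (i:ℕ) else 0)
      = 2 * stmt11g m y ((i:ℕ)+1) := by
    rw [if_pos (Finset.mem_range.mpr i.isLt)]; rfl
  have e2 : (if (i:ℕ)+1 ∈ Finset.range m then stmt11ext m y ((i:ℕ)+1) else 0)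
      = stmt11g m y ((i:ℕ)+2) := by
    by_cases h : (i:ℕ)+1 < m
    · rw [if_pos (Finset.mem_range.mpr h)]; rfl
    · rw [if_neg (by simpa using h)]
      show (0:ℝ) = stmt11ext m y ((i:ℕ)+1)
      rw [stmt11ext, dif_neg h]
  have e3 : (∑ t ∈ Finset.range m, if t+1 = (i:ℕ) then stmt11ext m y t else 0)
      = stmt11g m y (i:ℕ) := by
    rcases hi : (i:ℕ) with _ | k
    · simp [stmt11g]
    · have : ∀ t ∈ Finset.range m, (if t+1 = k+1 then stmt11ext m y t else 0)
          = (if t = k then stmt11ext m y t else 0) := by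
        intro t _; simp
      rw [Finset.sum_congr rfl this,
        Finset.sum_ite_eq' (Finset.range m) k (fun t => stmt11ext m y t)]
      rw [if_pos (Finset.mem_range.mpr (by have := i.isLt; omega))]
      rfl
  rw [e1, e2, e3]

lemma stmt11quad (m : ℕ) (y : Fin m → ℝ) :
    y ⬝ᵥ (stmt11lap m).mulVec y
      = ∑ i ∈ Finset.range (m+1), (stmt11g m y (i+1) - stmt11g m y i)^2 := by
  have h0 : stmt11g m y 0 = 0 := rfl
  have hm : stmt11g m y (m+1) = 0 := by
    show stmt11ext m y m = 0
    rw [stmt11ext, dif_neg (lt_irrefl m)]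
  have h1 : y ⬝ᵥ (stmt11lap m).mulVec y
      = ∑ t ∈ Finset.range m,
          stmt11g m y (t+1) * (2 * stmt11g m y (t+1) - stmt11g m y (t+2) - stmt11g m y t) := by
    rw [show y ⬝ᵥ (stmt11lap m).mulVec y = ∑ j : Fin m, y j * (stmt11lap m).mulVec y j from rfl]
    rw [← Fin.sum_univ_eq_sum_range (fun t =>
      stmt11g m y (t+1) * (2 * stmt11g m y (t+1) - stmt11g m y (t+2) - stmt11g m y t)) m]
    refine Finset.sum_congr rfl (fun j _ => ?_)
    rw [stmt11mulVec]
    have hj : stmt11g m y ((j:ℕ)+1) = y j := by simp [stmt11g, stmt11ext]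
    rw [hj]
  rw [h1, stmt11tele, hm, h0]
  ring

lemma stmt11symm (m : ℕ) : (stmt11lap m)ᵀ = stmt11lap m := by
  ext i j
  show stmt11lap m j i = stmt11lap m i j
  unfold stmt11lap
  split_ifs <;> first | rfl | (exfalso; omega)

lemma stmt11posdef (m : ℕ) : (stmt11lap m).PosDef := by
  rw [Matrix.posDef_iff_dotProduct_mulVec]
  constructor
  · show (stmt11lap m)ᴴ = stmt11lap m
    have h : (stmt11lap m)ᴴ = (stmt11lap m)ᵀ := by
      ext i j; simp [Matrix.conjTranspose_apply]
    rw [h, stmt11symm]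
  · intro x hx
    have hx' : star x ⬝ᵥ (stmt11lap m).mulVec x = x ⬝ᵥ (stmt11lap m).mulVec x := by
      simp
    rw [hx', stmt11quad]
    have hnn : (0:ℝ) ≤ ∑ i ∈ Finset.range (m+1), (stmt11g m x (i+1) - stmt11g m x i)^2 :=
      Finset.sum_nonneg (fun i _ => sq_nonneg _)
    rcases hnn.lt_or_eq with h | h
    · exact h
    · exfalso
      have hall : ∀ i ∈ Finset.range (m+1), (stmt11g m x (i+1) - stmt11g m x i)^2 = 0 := by
        intro i hi
        have := (Finset.sum_eq_zero_iff_of_nonneg (fun i _ => sq_nonneg _)).mp h.symm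
        exact this i hi
      have hstep : ∀ k, stmt11g m x k = 0 := by
        intro k
        induction k with
        | zero => rfl
        | succ k ih =>
            by_cases hk : k < m + 1
            · have h2 := hall k (Finset.mem_range.mpr hk)
              have h3 : stmt11g m x (k+1) - stmt11g m x k = 0 := by
                exact pow_eq_zero_iff (n := 2) (by norm_num) |>.mp h2
              linarith [h3, ih]
            · show stmt11ext m x k = 0
              rw [stmt11ext, dif_neg (by omega)]
      apply hx
      funext j
      have := hstep ((j:ℕ)+1)
      simpa [stmt11g, stmt11ext] using this

lemma stmt11sum1 (M : ℕ) : ∑ k ∈ Finset.range M, ((k:ℝ)+1) = (M:ℝ)*((M:ℝ)+1)/2 := by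
  induction M with
  | zero => simp
  | succ M ih => rw [Finset.sum_range_succ, ih]; push_cast; ring

lemma stmt11sum2 (M : ℕ) : ∑ k ∈ Finset.range M, ((k:ℝ)+1)^2 = (M:ℝ)*((M:ℝ)+1)*(2*(M:ℝ)+1)/6 := by
  induction M with
  | zero => simp
  | succ M ih => rw [Finset.sum_range_succ, ih]; push_cast; ring

/-- The discrete Dirichlet Laplacian `Δ⁽ⁿ⁾` is positive definite, and with
`μ₀ = 12/((n+1)n(n-1))` there is `μ₁ > 0` such that for all `y`,
`y·(Δ⁽ⁿ⁾y) - μ₀ (𝟙·y)² ≥ μ₁ |P_σ y|²`, where `P_σ` is the orthogonal projection onto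
the hyperplane orthogonal to `σ`, `σ_k = k(n-k)/2`. -/
theorem stmt_11 (n : ℕ) (hn : 2 ≤ n) :
    let Δ : Matrix (Fin (n-1)) (Fin (n-1)) ℝ := fun i j =>
      if (i:ℕ) = (j:ℕ) then 2
      else if (i:ℕ) + 1 = (j:ℕ) ∨ (j:ℕ) + 1 = (i:ℕ) then -1 else 0
    let σ : Fin (n-1) → ℝ := fun k => (((k:ℕ):ℝ) + 1) * ((n:ℝ) - (((k:ℕ):ℝ) + 1)) / 2
    let μ₀ : ℝ := 12 / (((n:ℝ) + 1) * (n:ℝ) * ((n:ℝ) - 1))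
    Δ.PosDef ∧
    ∃ μ₁ > 0, ∀ y : Fin (n-1) → ℝ,
      μ₁ * ∑ k, (y k - ((∑ j, σ j * y j) / (∑ j, σ j ^ 2)) * σ k) ^ 2
        ≤ y ⬝ᵥ Δ.mulVec y - μ₀ * (∑ k, y k) ^ 2 := by
  intro Δ σ μ₀
  have hnR : (2:ℝ) ≤ (n:ℝ) := by exact_mod_cast hn
  have hΔ : Δ = stmt11lap (n-1) := rfl
  have hμ : μ₀ = 12 / (((n:ℝ) + 1) * (n:ℝ) * ((n:ℝ) - 1)) := rfl
  -- extension of σ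
  have hgσ : ∀ k : ℕ, k ≤ n → stmt11g (n-1) σ k = (k:ℝ) * ((n:ℝ) - (k:ℝ)) / 2 := by
    intro k hk
    match k with
    | 0 => simp [stmt11g]
    | (j+1) =>
      show stmt11ext (n-1) σ j = _
      by_cases h : j < n - 1
      · rw [stmt11ext, dif_pos h]
        show ((j:ℝ)+1) * ((n:ℝ) - ((j:ℝ)+1))/2 = _
        push_cast
        ring
      · rw [stmt11ext, dif_neg h]
        have hj2 : ((j:ℕ):ℝ) + 1 = (n:ℝ) := by
          have : j + 1 = n := by omega
          exact_mod_cast congrArg (Nat.cast (R := ℝ)) this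
        push_cast
        rw [hj2]
        ring
  have hσ1 : Δ.mulVec σ = fun _ => (1:ℝ) := by
    funext i
    have hi := i.isLt
    rw [hΔ, stmt11mulVec]
    rw [hgσ ((i:ℕ)+1) (by omega), hgσ ((i:ℕ)+2) (by omega), hgσ (i:ℕ) (by omega)]
    push_cast
    ring
  have hdot : ∀ v : Fin (n-1) → ℝ, σ ⬝ᵥ Δ.mulVec v = ∑ k, v k := by
    intro v
    rw [Matrix.dotProduct_mulVec]
    have h1 : σ ᵥ* Δ = fun _ => (1:ℝ) := by
      rw [← Matrix.mulVec_transpose, hΔ, stmt11symm, ← hΔ, hσ1]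
    rw [h1]
    simp [dotProduct]
  have hcross : ∀ v : Fin (n-1) → ℝ, v ⬝ᵥ Δ.mulVec σ = ∑ k, v k := by
    intro v
    rw [hσ1]
    simp [dotProduct]
  -- sum of σ
  have hc1 : ((n-1:ℕ):ℝ) = (n:ℝ) - 1 := by
    have : (1:ℕ) ≤ n := by omega
    push_cast [this]
    ring
  have hS : (∑ k, σ k) = (n:ℝ)*((n:ℝ)-1)*((n:ℝ)+1)/12 := by
    have h0 : (∑ k, σ k) = ∑ k ∈ Finset.range (n-1), ((k:ℝ)+1)*((n:ℝ)-((k:ℝ)+1))/2 :=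
      Fin.sum_univ_eq_sum_range (fun k => ((k:ℝ)+1)*((n:ℝ)-((k:ℝ)+1))/2) (n-1)
    rw [h0]
    have hterm : ∀ k ∈ Finset.range (n-1),
        ((k:ℝ)+1)*((n:ℝ)-((k:ℝ)+1))/2 = (n:ℝ)/2*((k:ℝ)+1) - (1/2)*((k:ℝ)+1)^2 := by
      intro k _; ring
    rw [Finset.sum_congr rfl hterm, Finset.sum_sub_distrib, ← Finset.mul_sum, ← Finset.mul_sum,
      stmt11sum1, stmt11sum2, hc1]
    ring
  have hσ0 : σ ⟨0, by omega⟩ = ((n:ℝ) - 1)/2 := by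
    show ((((0:ℕ)):ℝ) + 1) * ((n:ℝ) - (((0:ℕ):ℝ) + 1)) / 2 = ((n:ℝ) - 1)/2
    push_cast; ring
  clear_value Δ σ μ₀
  have hden : (0:ℝ) < ((n:ℝ) + 1) * (n:ℝ) * ((n:ℝ) - 1) :=
    mul_pos (mul_pos (by linarith) (by linarith)) (by linarith)
  have hμS : μ₀ * (∑ k, σ k) = 1 := by
    rw [hS, hμ]
    have hn1 : (n:ℝ) - 1 ≠ 0 := by linarith
    field_simp
  have hμpos : 0 < μ₀ := by
    rw [hμ]
    positivity
  -- quadratic form facts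
  have hq0 : ∀ v : Fin (n-1) → ℝ, 0 ≤ v ⬝ᵥ Δ.mulVec v := by
    intro v
    rw [hΔ, stmt11quad]
    exact Finset.sum_nonneg (fun i _ => sq_nonneg _)
  have hPD : Δ.PosDef := by rw [hΔ]; exact stmt11posdef _
  have hPD' : ∀ v : Fin (n-1) → ℝ, v ≠ 0 → 0 < v ⬝ᵥ Δ.mulVec v := by
    intro v hv
    have := hPD.dotProduct_mulVec_pos hv
    simpa using this
  -- Cauchy-Schwarz
  have hCS : ∀ v : Fin (n-1) → ℝ, (∑ k, v k)^2 ≤ (∑ k, σ k) * (v ⬝ᵥ Δ.mulVec v) := by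
    intro v
    rcases eq_or_ne v 0 with rfl | hv
    · simp
    · have hvq : 0 < v ⬝ᵥ Δ.mulVec v := hPD' v hv
      have hexp : ∀ t : ℝ, 0 ≤ (∑ k, σ k) + 2*t*(∑ k, v k) + t^2*(v ⬝ᵥ Δ.mulVec v) := by
        intro t
        have h0 := hq0 (σ + t • v)
        have hexpand : (σ + t • v) ⬝ᵥ Δ.mulVec (σ + t • v)
            = (∑ k, σ k) + 2*t*(∑ k, v k) + t^2*(v ⬝ᵥ Δ.mulVec v) := by
          rw [Matrix.mulVec_add, Matrix.mulVec_smul, dotProduct_add,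
            add_dotProduct, add_dotProduct, dotProduct_smul,
            smul_dotProduct, smul_dotProduct, dotProduct_smul,
            hdot σ, hdot v, hcross v]
          simp only [smul_eq_mul]
          ring
        rw [hexpand] at h0
        exact h0
      have key := hexp (-((∑ k, v k)/(v ⬝ᵥ Δ.mulVec v)))
      have heq : (∑ k, σ k) + 2*(-((∑ k, v k)/(v ⬝ᵥ Δ.mulVec v)))*(∑ k, v k)
            + (-((∑ k, v k)/(v ⬝ᵥ Δ.mulVec v)))^2*(v ⬝ᵥ Δ.mulVec v)
          = (∑ k, σ k) - (∑ k, v k)^2/(v ⬝ᵥ Δ.mulVec v) := by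
        field_simp
        ring
      rw [heq] at key
      have := (div_le_iff₀ hvq).mp (by linarith : (∑ k, v k)^2/(v ⬝ᵥ Δ.mulVec v) ≤ (∑ k, σ k))
      linarith
  have hB0 : ∀ v : Fin (n-1) → ℝ, 0 ≤ v ⬝ᵥ Δ.mulVec v - μ₀ * (∑ k, v k)^2 := by
    intro v
    have h1 := hCS v
    have h2 : μ₀ * (∑ k, v k)^2 ≤ μ₀ * ((∑ k, σ k) * (v ⬝ᵥ Δ.mulVec v)) :=
      mul_le_mul_of_nonneg_left h1 hμpos.le
    have h3 : μ₀ * ((∑ k, σ k) * (v ⬝ᵥ Δ.mulVec v)) = v ⬝ᵥ Δ.mulVec v := by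
      rw [← mul_assoc, hμS, one_mul]
    linarith
  -- norm of σ
  have hNσ : 0 < ∑ j, σ j ^ 2 := by
    apply Finset.sum_pos'
    · intro j _; positivity
    · refine ⟨⟨0, by omega⟩, Finset.mem_univ _, ?_⟩
      rw [hσ0]
      nlinarith
  -- kernel argument
  have hker : ∀ z : Fin (n-1) → ℝ, (∑ j, σ j * z j) = 0 →
      z ⬝ᵥ Δ.mulVec z - μ₀*(∑ k, z k)^2 = 0 → z = 0 := by
    intro z horth hBz
    have hzq : z ⬝ᵥ Δ.mulVec z = μ₀ * (∑ k, z k)^2 := by linarith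
    set a : ℝ := μ₀ * ∑ k, z k with ha
    have hu : (z - a • σ) ⬝ᵥ Δ.mulVec (z - a • σ) = 0 := by
      rw [Matrix.mulVec_sub, Matrix.mulVec_smul, dotProduct_sub,
        sub_dotProduct, sub_dotProduct, dotProduct_smul,
        smul_dotProduct, smul_dotProduct, dotProduct_smul,
        hdot σ, hdot z, hcross z, hzq]
      simp only [smul_eq_mul, ha]
      linear_combination (μ₀ * (∑ k, z k)^2) * hμS
    have hz : z = a • σ := by
      by_contra h
      have hne : z - a • σ ≠ 0 := sub_ne_zero.mpr h
      exact absurd hu (ne_of_gt (hPD' _ hne))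
    have haz : a * (∑ j, σ j ^ 2) = 0 := by
      rw [hz] at horth
      rw [← horth]
      rw [Finset.mul_sum]
      refine Finset.sum_congr rfl (fun j _ => ?_)
      simp only [Pi.smul_apply, smul_eq_mul, sq]
      ring
    have ha0 : a = 0 := by
      rcases mul_eq_zero.mp haz with h | h
      · exact h
      · exact absurd h (ne_of_gt hNσ)
    rw [hz, ha0, zero_smul]
  refine ⟨hPD, ?_⟩
  -- compact minimization over the unit sphere in the hyperplane orthogonal to σ
  set K : Set (Fin (n-1) → ℝ) := {z | (∑ j, σ j * z j) = 0 ∧ (∑ k, z k ^ 2) = 1} with hK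
  have hKclosed : IsClosed K := by
    have h1 : IsClosed {z : Fin (n-1) → ℝ | (∑ j, σ j * z j) = 0} :=
      isClosed_eq (continuous_finset_sum _ (fun j _ => continuous_const.mul (continuous_apply j)))
        continuous_const
    have h2 : IsClosed {z : Fin (n-1) → ℝ | (∑ k, z k ^ 2) = 1} :=
      isClosed_eq (continuous_finset_sum _ (fun k _ => (continuous_apply k).pow 2))
        continuous_const
    rw [hK, Set.setOf_and]
    exact h1.inter h2
  have hKbdd : Bornology.IsBounded K := by
    apply Bornology.IsBounded.subset (Metric.isBounded_closedBall (x := (0 : Fin (n-1) → ℝ)) (r := 1))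
    intro z hz
    rw [Metric.mem_closedBall, dist_zero_right]
    rw [pi_norm_le_iff_of_nonneg zero_le_one]
    intro i
    rw [Real.norm_eq_abs]
    have hz2 : (∑ k, z k ^ 2) = 1 := hz.2
    have h1 : z i ^ 2 ≤ 1 := by
      have h2 := Finset.single_le_sum (f := fun k => z k ^ 2) (fun k _ => sq_nonneg _)
        (Finset.mem_univ i)
      rw [hz2] at h2
      exact h2
    nlinarith [sq_abs (z i), abs_nonneg (z i)]
  have hKcomp : IsCompact K := Metric.isCompact_of_isClosed_isBounded hKclosed hKbdd
  have hform : ∀ v : Fin (n-1) → ℝ, v ⬝ᵥ Δ.mulVec v = ∑ i, v i * ∑ j, Δ i j * v j :=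
    fun v => rfl
  have hcont : Continuous (fun v : Fin (n-1) → ℝ =>
      v ⬝ᵥ Δ.mulVec v - μ₀ * (∑ k, v k)^2) := by
    simp only [hform]
    apply Continuous.sub
    · exact continuous_finset_sum _ (fun i _ => (continuous_apply i).mul
        (continuous_finset_sum _ (fun j _ => continuous_const.mul (continuous_apply j))))
    · exact continuous_const.mul ((continuous_finset_sum _ (fun k _ => continuous_apply k)).pow 2)
  obtain ⟨μ₁, hμ₁pos, hμ₁K⟩ : ∃ μ₁ > 0, ∀ z ∈ K,
      μ₁ ≤ z ⬝ᵥ Δ.mulVec z - μ₀ * (∑ k, z k)^2 := by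
    by_cases hKne : K.Nonempty
    · obtain ⟨x₀, hx₀K, hmin⟩ := hKcomp.exists_isMinOn hKne hcont.continuousOn
      refine ⟨_, ?_, fun z hz => (isMinOn_iff.mp hmin) z hz⟩
      rcases (hB0 x₀).lt_or_eq with h | h
      · exact h
      · exfalso
        have hx0 : x₀ = 0 := hker x₀ hx₀K.1 h.symm
        have h2 : (∑ k, x₀ k ^ 2) = 1 := hx₀K.2
        rw [hx0] at h2
        simp at h2
    · exact ⟨1, one_pos, fun z hz => absurd ⟨z, hz⟩ hKne⟩
  refine ⟨μ₁, hμ₁pos, ?_⟩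
  intro y
  set c : ℝ := (∑ j, σ j * y j) / (∑ j, σ j ^ 2) with hc
  set z : Fin (n-1) → ℝ := fun k => y k - c * σ k with hzdef
  have e : (∑ k, (y k - c * σ k)^2) = ∑ k, z k ^ 2 := rfl
  have horthz : (∑ j, σ j * z j) = 0 := by
    have h1 : (∑ j, σ j * z j) = (∑ j, σ j * y j) - c * (∑ j, σ j ^ 2) := by
      have h2 : ∀ j : Fin (n-1), σ j * z j = σ j * y j - c * σ j ^ 2 := by
        intro j
        show σ j * (y j - c * σ j) = _
        ring
      rw [Finset.sum_congr rfl (fun j _ => h2 j), Finset.sum_sub_distrib, ← Finset.mul_sum]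
    rw [h1, hc, div_mul_cancel₀ _ (ne_of_gt hNσ), sub_self]
  have hyz : y = z + c • σ := by
    funext k
    show y k = (y k - c * σ k) + c * σ k
    ring
  have hBy : y ⬝ᵥ Δ.mulVec y - μ₀ * (∑ k, y k)^2
      = z ⬝ᵥ Δ.mulVec z - μ₀ * (∑ k, z k)^2 := by
    rw [hyz, Matrix.mulVec_add, Matrix.mulVec_smul, dotProduct_add,
      add_dotProduct, add_dotProduct, dotProduct_smul,
      smul_dotProduct, smul_dotProduct, dotProduct_smul,
      hdot σ, hdot z, hcross z]
    simp only [Pi.add_apply, Pi.smul_apply, smul_eq_mul, Finset.sum_add_distrib,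
      ← Finset.mul_sum]
    linear_combination (-(2*c*(∑ k, z k)) - c^2*(∑ k, σ k)) * hμS
  rcases eq_or_ne (∑ k, z k ^ 2) 0 with hz0 | hz0
  · rw [e, hz0, mul_zero]
    exact hB0 y
  · have hzpos : 0 < ∑ k, z k ^ 2 :=
      lt_of_le_of_ne (Finset.sum_nonneg (fun k _ => sq_nonneg _)) (Ne.symm hz0)
    set r : ℝ := Real.sqrt (∑ k, z k ^ 2) with hr
    have hrpos : 0 < r := Real.sqrt_pos.mpr hzpos
    have hr2 : r^2 = ∑ k, z k ^ 2 := Real.sq_sqrt hzpos.le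
    have hwK : (r⁻¹ • z) ∈ K := by
      rw [hK]
      constructor
    -- hK membership parts
      · have h1 : (∑ j, σ j * (r⁻¹ • z) j) = r⁻¹ * ∑ j, σ j * z j := by
          rw [Finset.mul_sum]
          refine Finset.sum_congr rfl (fun j _ => ?_)
          simp only [Pi.smul_apply, smul_eq_mul]
          ring
        rw [h1, horthz, mul_zero]
      · have h1 : (∑ k, ((r⁻¹ • z) k) ^ 2) = (r⁻¹)^2 * ∑ k, z k ^ 2 := by
          rw [Finset.mul_sum]
          refine Finset.sum_congr rfl (fun k _ => ?_)
          simp only [Pi.smul_apply, smul_eq_mul]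
          ring
        rw [h1, ← hr2]
        field_simp
    have h1 : μ₁ ≤ (r⁻¹ • z) ⬝ᵥ Δ.mulVec (r⁻¹ • z) - μ₀ * (∑ k, (r⁻¹ • z) k)^2 :=
      hμ₁K _ hwK
    have h2 : (r⁻¹ • z) ⬝ᵥ Δ.mulVec (r⁻¹ • z) - μ₀ * (∑ k, (r⁻¹ • z) k)^2
        = (r⁻¹)^2 * (z ⬝ᵥ Δ.mulVec z - μ₀ * (∑ k, z k)^2) := by
      rw [Matrix.mulVec_smul, smul_dotProduct, dotProduct_smul]
      simp only [smul_eq_mul, Pi.smul_apply, ← Finset.mul_sum]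
      ring
    rw [e, hBy]
    have hinv : r^2 * (r⁻¹)^2 = 1 := by
      field_simp
    calc μ₁ * (∑ k, z k ^ 2) = r^2 * μ₁ := by rw [← hr2]; ring
      _ ≤ r^2 * ((r⁻¹ • z) ⬝ᵥ Δ.mulVec (r⁻¹ • z) - μ₀ * (∑ k, (r⁻¹ • z) k)^2) :=
          mul_le_mul_of_nonneg_left h1 (sq_nonneg r)
      _ = r^2 * ((r⁻¹)^2 * (z ⬝ᵥ Δ.mulVec z - μ₀ * (∑ k, z k)^2)) := by rw [h2]
      _ = z ⬝ᵥ Δ.mulVec z - μ₀ * (∑ k, z k)^2 := by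
          rw [← mul_assoc, hinv, one_mul]
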